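/- Let x > 0 be real and a > 0. Then |Γ(x + it)| decays faster than any polynomial as |t| → ∞; specifically, for every positive integer m there exists C > 0 such that |Γ(x + it)| ≤ C |t|^{-m} for all |t| ≥ 1. -/

import Mathlib

open Complex Real

lemma abs_Gamma_le_Gamma_re {z : ℂ} (hz : 0 < z.re) :
    ‖Complex.Gamma z‖ ≤ Real.Gamma z.re := by
  rw [Complex.Gamma_eq_integral hz, Real.Gamma_eq_integral hz, Complex.GammaIntegral]
  calc ‖∫ x in Set.Ioi (0:ℝ), ((-x).exp : ℂ) * (x:ℂ) ^ (z - 1)‖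
      ≤ ∫ x in Set.Ioi (0:ℝ), ‖((-x).exp : ℂ) * (x:ℂ) ^ (z - 1)‖ :=
        by simpa using MeasureTheory.norm_integral_le_integral_norm (fun x : ℝ => ((-x).exp : ℂ) * (x:ℂ) ^ (z - 1))
    _ = ∫ x in Set.Ioi (0:ℝ), Real.exp (-x) * x ^ (z.re - 1) := by
        refine MeasureTheory.setIntegral_congr_fun measurableSet_Ioi fun x hx => ?_
        rw [norm_mul,
          Complex.norm_cpow_eq_rpow_re_of_pos hx, Complex.norm_real, Real.norm_eq_abs,
          abs_of_pos (Real.exp_pos _), Complex.sub_re, Complex.one_re]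
    _ ≤ _ := le_refl _

lemma Gamma_add_nat (z : ℂ) (hz : z.im ≠ 0) (n : ℕ) :
    Complex.Gamma (z + n) = (∏ k ∈ Finset.range n, (z + k)) * Complex.Gamma z := by
  induction n with
  | zero => simp
  | succ n ih =>
      have hne : z + n ≠ 0 := fun h => by
        apply hz; have := congrArg Complex.im h; simpa using this
      have : z + (n + 1 : ℕ) = (z + n) + 1 := by push_cast; ring
      rw [this, Complex.Gamma_add_one _ hne, ih, Finset.prod_range_succ]; ring

theorem stmt10 (x : ℝ) (hx : 0 < x) (m : ℕ) (hm : 0 < m) :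
    ∃ C : ℝ, 0 < C ∧ ∀ t : ℝ, 1 ≤ |t| →
      ‖Complex.Gamma ((x : ℂ) + t * Complex.I)‖ ≤ C * |t| ^ (-(m : ℝ)) := by
  refine ⟨Real.Gamma (x + m), Real.Gamma_pos_of_pos (by positivity), fun t ht => ?_⟩
  set z : ℂ := (x : ℂ) + t * Complex.I with hzdef
  have hre : z.re = x := by simp [hzdef]
  have him : z.im = t := by simp [hzdef]
  have ht0 : t ≠ 0 := fun h => by simp [h] at ht; linarith
  have hprod : Complex.Gamma (z + m) = (∏ k ∈ Finset.range m, (z + k)) * Complex.Gamma z :=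
    Gamma_add_nat z (him ▸ ht0) m
  have hbound : |t| ^ (m : ℕ) ≤ ‖∏ k ∈ Finset.range m, (z + k)‖ := by
    rw [norm_prod]
    calc |t| ^ (m : ℕ) = ∏ _k ∈ Finset.range m, |t| := by
          rw [Finset.prod_const, Finset.card_range]
      _ ≤ _ := by
          refine Finset.prod_le_prod (fun _ _ => abs_nonneg t) fun k _ => ?_
          have : |(z + k).im| ≤ ‖z + k‖ := Complex.abs_im_le_norm _
          simpa [him] using this
  have habs : ‖∏ k ∈ Finset.range m, (z + k)‖ * ‖Complex.Gamma z‖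
      = ‖Complex.Gamma (z + m)‖ := by rw [hprod, norm_mul]
  have hup : ‖Complex.Gamma (z + m)‖ ≤ Real.Gamma (x + m) := by
    have : (z + m).re = x + m := by simp [hre]
    simpa [this] using abs_Gamma_le_Gamma_re (z := z + m) (by rw [this]; positivity)
  have htpos : (0:ℝ) < |t| ^ (m : ℕ) := by positivity
  have key : |t| ^ (m : ℕ) * ‖Complex.Gamma z‖ ≤ Real.Gamma (x + m) := by
    calc |t| ^ (m : ℕ) * ‖Complex.Gamma z‖
        ≤ ‖∏ k ∈ Finset.range m, (z + k)‖ * ‖Complex.Gamma z‖ :=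
          mul_le_mul_of_nonneg_right hbound (norm_nonneg _)
      _ = ‖Complex.Gamma (z + m)‖ := habs
      _ ≤ _ := hup
  have hrw : |t| ^ (-(m : ℝ)) = (|t| ^ (m : ℕ))⁻¹ := by
    rw [Real.rpow_neg (abs_nonneg t), Real.rpow_natCast]
  rw [hrw]
  calc ‖Complex.Gamma z‖ ≤ Real.Gamma (x + m) / |t| ^ (m:ℕ) := by
        rwa [le_div_iff₀ htpos, mul_comm]
    _ = Real.Gamma (x + m) * (|t| ^ (m:ℕ))⁻¹ := div_eq_mul_inv _ _
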